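/- Let ρ₀ be a bounded, everywhere strictly positive probability density on ℝ^d with finite first moment, and let ρ₁ be a bounded continuous probability density on ℝ^d with finite first moment. For σ_s > 0 define the regularized vector field v_{σ_s}(x,t) = [∫ (x₁ − x(1−σ_s)) ρ₀((x − t x₁)/(1 + σ_s t − t)) ρ₁(x₁) dx₁] / [(1 + σ_s t − t) ∫ ρ₀((x − t x₁)/(1 + σ_s t − t)) ρ₁(x₁) dx₁]. Then for every x ∈ ℝ^d: (i) for every t ∈ [0,1), lim_{σ_s → 0⁺} v_{σ_s}(x,t) = [∫ (x₁ − x) ρ₀((x − t x₁)/(1−t)) ρ₁(x₁) dx₁] / [(1−t) ∫ ρ₀((x − t x₁)/(1−t)) ρ₁(x₁) dx₁]; and (ii) if moreover ρ₁(x) > 0, then lim_{σ_s → 0⁺} v_{σ_s}(x,1) = x − ∫ x₀ ρ₀(x₀) dx₀. -/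

import Mathlib

open MeasureTheory Filter

lemma cov_aux {d : ℕ} {V : Type*} [NormedAddCommGroup V] [NormedSpace ℝ V]
    (G : EuclideanSpace ℝ (Fin d) → V) {c t : ℝ} (hc : 0 < c) (ht : 0 < t)
    (x : EuclideanSpace ℝ (Fin d)) :
    ∫ x₁, G (c⁻¹ • (x - t • x₁)) = (c / t) ^ d • ∫ y, G y := by
  have h1 : ∀ x₁ : EuclideanSpace ℝ (Fin d),
      c⁻¹ • (x - t • x₁) = (-(c⁻¹ * t)) • x₁ + c⁻¹ • x := by
    intro x₁; rw [smul_sub, smul_smul, sub_eq_add_neg, neg_smul, add_comm]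
  simp_rw [h1]
  rw [Measure.integral_comp_smul volume (fun y => G (y + c⁻¹ • x)) (-(c⁻¹ * t)),
    integral_add_right_eq_self (fun y => G y) (c⁻¹ • x)]
  congr 1
  rw [finrank_euclideanSpace_fin, abs_inv, abs_pow, abs_neg,
    abs_of_pos (by positivity : (0:ℝ) < c⁻¹ * t), ← inv_pow]
  congr 1
  field_simp

lemma tendsto_param {d : ℕ} {V : Type*} [NormedAddCommGroup V] [NormedSpace ℝ V]
    (f : EuclideanSpace ℝ (Fin d) → ℝ) (hfnn : ∀ y, 0 ≤ f y)
    (hint1 : Integrable f) (hint2 : Integrable (fun y => f y * ‖y‖))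
    (φ : ℝ → EuclideanSpace ℝ (Fin d) → V)
    (hφm : ∀ s, AEStronglyMeasurable (fun y => f y • φ s y) volume)
    (hφc : ∀ y, ContinuousWithinAt (fun s => φ s y) (Set.Ioi 0) 0)
    (A B : ℝ)
    (hbound : ∀ s ∈ Set.Ioo (0:ℝ) 1, ∀ y, ‖φ s y‖ ≤ A + B * ‖y‖) :
    Tendsto (fun s => ∫ y, f y • φ s y) (nhdsWithin 0 (Set.Ioi 0))
      (nhds (∫ y, f y • φ 0 y)) := by
  refine tendsto_integral_filter_of_dominated_convergence
    (fun y => f y * (A + B * ‖y‖)) (Eventually.of_forall hφm) ?_ ?_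
    (Eventually.of_forall fun y => tendsto_const_nhds.smul (hφc y))
  · filter_upwards [Ioo_mem_nhdsGT (by norm_num : (0:ℝ) < 1)] with s hs
    refine Eventually.of_forall fun y => ?_
    rw [norm_smul, Real.norm_eq_abs, abs_of_nonneg (hfnn y)]
    exact mul_le_mul_of_nonneg_left (hbound s hs y) (hfnn y)
  · exact ((hint1.mul_const A).add (hint2.mul_const B)).congr
      (Eventually.of_forall fun y => by simp; ring)

set_option maxHeartbeats 1000000

/-- Limits of the regularized explicit flow-matching vector field as the
regularization `σ_s → 0⁺`: for `t ∈ [0,1)` it recovers the explicit vector field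
of the linear flow, and at `t = 1` (where `ρ₁(x) > 0`) it equals `x` minus the
mean of `ρ₀`. -/
theorem exfm_regularized_vector_field_limits {d : ℕ}
    (ρ0 ρ1 : EuclideanSpace ℝ (Fin d) → ℝ)
    (h0meas : Measurable ρ0) (h0nonneg : ∀ y, 0 ≤ ρ0 y) (h0prob : ∫ y, ρ0 y = 1)
    (h0bdd : ∃ C, ∀ y, ρ0 y ≤ C) (h0pos : ∀ y, 0 < ρ0 y)
    (h0mom : Integrable (fun y => ρ0 y • y))
    (h1cont : Continuous ρ1) (h1bdd : ∃ C, ∀ y, ρ1 y ≤ C)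
    (h1nonneg : ∀ y, 0 ≤ ρ1 y) (h1prob : ∫ y, ρ1 y = 1)
    (h1mom : Integrable (fun y => ρ1 y • y))
    (v : ℝ → ℝ → EuclideanSpace ℝ (Fin d) → EuclideanSpace ℝ (Fin d))
    (hv : ∀ σs t x, v σs t x =
      ((1 + σs * t - t) *
          ∫ x₁, ρ0 ((1 + σs * t - t)⁻¹ • (x - t • x₁)) * ρ1 x₁)⁻¹ •
        ∫ x₁, (ρ0 ((1 + σs * t - t)⁻¹ • (x - t • x₁)) * ρ1 x₁) •
          (x₁ - (1 - σs) • x))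
    (x : EuclideanSpace ℝ (Fin d)) :
    (∀ t ∈ Set.Ico (0 : ℝ) 1,
      Tendsto (fun σs => v σs t x) (nhdsWithin 0 (Set.Ioi 0))
        (nhds
          (((1 - t) * ∫ x₁, ρ0 ((1 - t)⁻¹ • (x - t • x₁)) * ρ1 x₁)⁻¹ •
            ∫ x₁, (ρ0 ((1 - t)⁻¹ • (x - t • x₁)) * ρ1 x₁) • (x₁ - x)))) ∧
    (0 < ρ1 x →
      Tendsto (fun σs => v σs 1 x) (nhdsWithin 0 (Set.Ioi 0))
        (nhds (x - ∫ x₀, ρ0 x₀ • x₀))) := by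
  classical
  -- basic integrability facts
  have h0int : Integrable ρ0 := by
    by_contra h; rw [integral_undef h] at h0prob; exact one_ne_zero h0prob.symm
  have h1int : Integrable ρ1 := by
    by_contra h; rw [integral_undef h] at h1prob; exact one_ne_zero h1prob.symm
  have h0mom' : Integrable (fun y => ρ0 y * ‖y‖) :=
    h0mom.norm.congr (Eventually.of_forall fun y => by
      simp only [norm_smul, Real.norm_eq_abs]; rw [abs_of_nonneg (h0nonneg y)])
  have h1mom' : Integrable (fun y => ρ1 y * ‖y‖) :=
    h1mom.norm.congr (Eventually.of_forall fun y => by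
      simp only [norm_smul, Real.norm_eq_abs]; rw [abs_of_nonneg (h1nonneg y)])
  obtain ⟨C1, hC1⟩ := h1bdd
  have hC1nn : 0 ≤ C1 := le_trans (h1nonneg 0) (hC1 0)
  have key : ∀ (c t : ℝ), c ≠ 0 → t ≠ 0 → ∀ z : EuclideanSpace ℝ (Fin d),
      t⁻¹ • (x - c • (c⁻¹ • (x - t • z))) = z := by
    intro c t hc ht z
    rw [smul_inv_smul₀ hc, sub_sub_cancel, inv_smul_smul₀ ht]
  -- change of variables identities
  have hDeq : ∀ a t' : ℝ, 0 < a → 0 < t' →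
      ∫ x₁, ρ0 (a⁻¹ • (x - t' • x₁)) * ρ1 x₁
        = (a / t') ^ d • ∫ y, ρ0 y * ρ1 (t'⁻¹ • (x - a • y)) := by
    intro a t' ha ht'
    rw [← cov_aux (fun y => ρ0 y * ρ1 (t'⁻¹ • (x - a • y))) ha ht' x]
    congr 1; funext x₁
    rw [key a t' ha.ne' ht'.ne' x₁]
  have hNeq : ∀ a t' b : ℝ, 0 < a → 0 < t' →
      ∫ x₁, (ρ0 (a⁻¹ • (x - t' • x₁)) * ρ1 x₁) • (x₁ - b • x)
        = (a / t') ^ d • ∫ y, (ρ0 y * ρ1 (t'⁻¹ • (x - a • y))) •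
            (t'⁻¹ • (x - a • y) - b • x) := by
    intro a t' b ha ht'
    rw [← cov_aux (fun y => (ρ0 y * ρ1 (t'⁻¹ • (x - a • y))) •
          (t'⁻¹ • (x - a • y) - b • x)) ha ht' x]
    congr 1; funext x₁
    rw [key a t' ha.ne' ht'.ne' x₁]
  constructor
  · rintro t ⟨ht0, ht1⟩
    rcases eq_or_lt_of_le ht0 with rfl | htpos
    · -- case t = 0
      simp only [sub_zero, zero_smul, inv_one, one_smul, one_mul]
      have hveq : ∀ s : ℝ, v s 0 x
          = (∫ x₁, ρ0 x * ρ1 x₁)⁻¹ •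
              ∫ x₁, (ρ0 x * ρ1 x₁) • (x₁ - (1 - s) • x) := by
        intro s
        rw [hv]
        have e1 : (1 + s * 0 - 0 : ℝ) = 1 := by ring
        rw [e1]
        simp only [inv_one, one_smul, one_mul, zero_smul, sub_zero]
      have hN := tendsto_param ρ1 h1nonneg h1int h1mom'
        (fun s x₁ => ρ0 x • (x₁ - (1 - s) • x))
        (fun s => ((h1cont.smul
          ((continuous_id.sub continuous_const).const_smul (ρ0 x)))).aestronglyMeasurable)
        (fun x₁ => (Continuous.continuousWithinAt (by
          fun_prop)))
        (ρ0 x * ‖x‖) (ρ0 x) ?_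
      swap
      · intro s hs x₁
        rw [norm_smul, Real.norm_eq_abs, abs_of_nonneg (h0pos x).le]
        have h1 : ‖x₁ - (1 - s) • x‖ ≤ ‖x₁‖ + ‖(1 - s) • x‖ := norm_sub_le _ _
        have h2 : ‖(1 - s) • x‖ = |1 - s| * ‖x‖ := by
          rw [norm_smul, Real.norm_eq_abs]
        have h3 : |1 - s| ≤ 1 := by
          rw [abs_le]; constructor <;> [linarith [hs.2]; linarith [hs.1]]
        nlinarith [norm_nonneg x, norm_nonneg x₁, (h0pos x).le,
          mul_le_mul_of_nonneg_right h3 (norm_nonneg x)]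
      have hrew : ∀ s : ℝ, (∫ x₁, ρ1 x₁ • (ρ0 x • (x₁ - (1 - s) • x)))
          = ∫ x₁, (ρ0 x * ρ1 x₁) • (x₁ - (1 - s) • x) := by
        intro s; congr 1; funext x₁; rw [smul_smul, mul_comm]
      rw [hrew 0] at hN
      simp only [sub_zero, one_smul] at hN
      exact (Tendsto.congr (fun s => (hveq s).symm)
        ((hN.congr hrew).const_smul (∫ x₁, ρ0 x * ρ1 x₁)⁻¹))
    · -- case 0 < t < 1
      have ht1' : (0:ℝ) < 1 - t := by linarith
      have hcpos : ∀ s : ℝ, 0 < s → 0 < 1 + s * t - t := fun s hs => by nlinarith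
      have hconts : Continuous fun s : ℝ => 1 + s * t - t :=
        (continuous_const.add (continuous_id.mul continuous_const)).sub continuous_const
      have hcontf : Continuous fun y : EuclideanSpace ℝ (Fin d) =>
          t⁻¹ • (x - (1 - t) • y) :=
        by fun_prop
      have hcancel : ∀ (k a D : ℝ) (N : EuclideanSpace ℝ (Fin d)), k ≠ 0 →
          (a * (k • D))⁻¹ • (k • N) = (a * D)⁻¹ • N := by
        intro k a D N hk
        rw [smul_eq_mul, smul_smul]
        congr 1
        rw [show a * (k * D) = k * (a * D) by ring, mul_inv, mul_comm k⁻¹,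
          mul_assoc, inv_mul_cancel₀ hk, mul_one]
      -- eventual equality with the substituted form
      have hveq : ∀ᶠ s in nhdsWithin (0:ℝ) (Set.Ioi 0),
          v s t x = ((1 + s*t - t) *
              ∫ y, ρ0 y * ρ1 (t⁻¹ • (x - (1 + s*t - t) • y)))⁻¹ •
            ∫ y, (ρ0 y * ρ1 (t⁻¹ • (x - (1 + s*t - t) • y))) •
              (t⁻¹ • (x - (1 + s*t - t) • y) - (1 - s) • x) := by
        filter_upwards [self_mem_nhdsWithin] with s hs
        have hcs := hcpos s hs
        rw [hv, hDeq _ t hcs htpos, hNeq _ t (1 - s) hcs htpos,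
          hcancel _ _ _ _ (pow_ne_zero _ (div_ne_zero hcs.ne' htpos.ne'))]
      -- limit of the denominator integral
      have hDlim : Tendsto (fun s => ∫ y, ρ0 y * ρ1 (t⁻¹ • (x - (1 + s*t - t) • y)))
          (nhdsWithin 0 (Set.Ioi 0))
          (nhds (∫ y, ρ0 y * ρ1 (t⁻¹ • (x - (1 - t) • y)))) := by
        have H := tendsto_param ρ0 h0nonneg h0int h0mom'
          (fun s y => ρ1 (t⁻¹ • (x - (1 + s*t - t) • y)))
          (fun s => by
            exact (h0meas.mul ((h1cont.comp
              (by fun_prop : Continuous fun y : EuclideanSpace ℝ (Fin d) =>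
                t⁻¹ • (x - (1 + s*t - t) • y))).measurable)).aestronglyMeasurable)
          (fun y => (h1cont.comp ((continuous_const.sub
            (hconts.smul continuous_const)).const_smul t⁻¹)).continuousWithinAt)
          C1 0 ?_
        · simp only [smul_eq_mul, zero_mul, add_zero, sub_zero] at H
          exact H
        · intro s hs y
          rw [Real.norm_eq_abs, abs_of_nonneg (h1nonneg _)]
          simpa using hC1 _
      -- limit of the numerator integral
      have hNlim : Tendsto (fun s => ∫ y,
            (ρ0 y * ρ1 (t⁻¹ • (x - (1 + s*t - t) • y))) •
              (t⁻¹ • (x - (1 + s*t - t) • y) - (1 - s) • x))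
          (nhdsWithin 0 (Set.Ioi 0))
          (nhds (∫ y, (ρ0 y * ρ1 (t⁻¹ • (x - (1 - t) • y))) •
              (t⁻¹ • (x - (1 - t) • y) - x))) := by
        have H := tendsto_param ρ0 h0nonneg h0int h0mom'
          (fun s y => ρ1 (t⁻¹ • (x - (1 + s*t - t) • y)) •
              (t⁻¹ • (x - (1 + s*t - t) • y) - (1 - s) • x))
          (fun s => by
            have L : Continuous fun y : EuclideanSpace ℝ (Fin d) =>
                t⁻¹ • (x - (1 + s*t - t) • y) :=
              by fun_prop
            exact (h0meas.smul (((h1cont.comp L).smul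
              (L.sub continuous_const)).measurable)).aestronglyMeasurable)
          (fun y => by
            have L : Continuous fun s : ℝ => t⁻¹ • (x - (1 + s*t - t) • y) :=
              by fun_prop
            exact ((h1cont.comp L).smul (L.sub
              ((continuous_const.sub continuous_id).smul
                continuous_const))).continuousWithinAt)
          (C1 * (t⁻¹ * ‖x‖ + ‖x‖)) (C1 * t⁻¹) ?_
        · simp only [smul_smul, zero_mul, add_zero, sub_zero, one_smul] at H
          exact H
        · intro s hs y
          have hc01 : 0 < 1 + s*t - t := hcpos s hs.1
          have hz : ‖t⁻¹ • (x - (1 + s*t - t) • y)‖ ≤ t⁻¹ * (‖x‖ + ‖y‖) := by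
            rw [norm_smul, Real.norm_eq_abs, abs_of_pos (by positivity : (0:ℝ) < t⁻¹)]
            refine mul_le_mul_of_nonneg_left ?_ (by positivity)
            calc ‖x - (1 + s*t - t) • y‖ ≤ ‖x‖ + ‖(1 + s*t - t) • y‖ := norm_sub_le _ _
              _ ≤ ‖x‖ + ‖y‖ := by
                  rw [norm_smul, Real.norm_eq_abs, abs_of_pos hc01]
                  nlinarith [norm_nonneg y, mul_nonneg (mul_nonneg htpos.le (sub_nonneg.2 hs.2.le)) (norm_nonneg y)]
          have h1s : ‖(1 - s) • x‖ ≤ ‖x‖ := by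
            rw [norm_smul, Real.norm_eq_abs]
            have habs : |1 - s| ≤ 1 := by
              rw [abs_le]; constructor <;> [linarith [hs.2]; linarith [hs.1]]
            nlinarith [norm_nonneg x]
          calc ‖ρ1 (t⁻¹ • (x - (1 + s*t - t) • y)) •
                (t⁻¹ • (x - (1 + s*t - t) • y) - (1 - s) • x)‖
              = |ρ1 (t⁻¹ • (x - (1 + s*t - t) • y))| *
                ‖t⁻¹ • (x - (1 + s*t - t) • y) - (1 - s) • x‖ := by
                rw [norm_smul, Real.norm_eq_abs]
            _ ≤ C1 * ‖t⁻¹ • (x - (1 + s*t - t) • y) - (1 - s) • x‖ := by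
                refine mul_le_mul_of_nonneg_right ?_ (norm_nonneg _)
                rw [abs_of_nonneg (h1nonneg _)]; exact hC1 _
            _ ≤ C1 * (t⁻¹ * (‖x‖ + ‖y‖) + ‖x‖) :=
                mul_le_mul_of_nonneg_left
                  (le_trans (norm_sub_le _ _) (add_le_add hz h1s)) hC1nn
            _ = C1 * (t⁻¹ * ‖x‖ + ‖x‖) + (C1 * t⁻¹) * ‖y‖ := by ring
      -- positivity of the limiting denominator
      have hD0nn : ∀ y, 0 ≤ ρ0 y * ρ1 (t⁻¹ • (x - (1 - t) • y)) :=
        fun y => mul_nonneg (h0nonneg y) (h1nonneg _)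
      have hD0int : Integrable (fun y => ρ0 y * ρ1 (t⁻¹ • (x - (1 - t) • y))) := by
        refine Integrable.mono' (h0int.const_mul C1)
          ((h0meas.mul ((h1cont.comp hcontf).measurable)).aestronglyMeasurable)
          (Eventually.of_forall fun y => ?_)
        rw [Real.norm_eq_abs, abs_of_nonneg (hD0nn y)]
        calc ρ0 y * ρ1 _ ≤ ρ0 y * C1 :=
              mul_le_mul_of_nonneg_left (hC1 _) (h0nonneg y)
          _ = C1 * ρ0 y := mul_comm _ _
      have hD0pos : 0 < ∫ y, ρ0 y * ρ1 (t⁻¹ • (x - (1 - t) • y)) := by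
        refine (integral_pos_iff_support_of_nonneg hD0nn hD0int).2 ?_
        obtain ⟨z, hz⟩ : ∃ z, 0 < ρ1 z := by
          by_contra h; push_neg at h
          have hz0 : ρ1 = fun _ => 0 :=
            funext fun z => le_antisymm (h z) (h1nonneg z)
          rw [hz0] at h1prob; simp at h1prob
        have hUopen : IsOpen ((fun y : EuclideanSpace ℝ (Fin d) =>
            t⁻¹ • (x - (1 - t) • y)) ⁻¹' {w | 0 < ρ1 w}) :=
          (isOpen_lt continuous_const h1cont).preimage hcontf
        have hUne : ((fun y : EuclideanSpace ℝ (Fin d) =>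
            t⁻¹ • (x - (1 - t) • y)) ⁻¹' {w | 0 < ρ1 w}).Nonempty := by
          refine ⟨(1 - t)⁻¹ • (x - t • z), ?_⟩
          simp only [Set.mem_preimage, Set.mem_setOf_eq]
          rw [key (1 - t) t ht1'.ne' htpos.ne' z]; exact hz
        refine lt_of_lt_of_le (hUopen.measure_pos volume hUne) (measure_mono ?_)
        intro y hy
        exact Function.mem_support.2 (mul_pos (h0pos y) hy).ne'
      -- assemble
      have hclim : Tendsto (fun s : ℝ => 1 + s * t - t)
          (nhdsWithin 0 (Set.Ioi 0)) (nhds (1 - t)) := by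
        have h : Tendsto (fun s : ℝ => 1 + s * t - t)
            (nhdsWithin (0:ℝ) (Set.Ioi 0)) (nhds (1 + 0 * t - t)) :=
          (hconts.tendsto 0).mono_left nhdsWithin_le_nhds
        simpa using h
      have hne : (1 - t) * (∫ y, ρ0 y * ρ1 (t⁻¹ • (x - (1 - t) • y))) ≠ 0 :=
        (mul_pos ht1' hD0pos).ne'
      have hmain := ((hclim.mul hDlim).inv₀ hne).smul hNlim
      rw [hDeq (1 - t) t ht1' htpos,
        show (∫ x₁, (ρ0 ((1 - t)⁻¹ • (x - t • x₁)) * ρ1 x₁) • (x₁ - x))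
            = ∫ x₁, (ρ0 ((1 - t)⁻¹ • (x - t • x₁)) * ρ1 x₁) • (x₁ - (1:ℝ) • x) from by
          simp only [one_smul],
        hNeq (1 - t) t 1 ht1' htpos,
        hcancel _ _ _ _ (pow_ne_zero _ (div_ne_zero ht1'.ne' htpos.ne'))]
      simp only [one_smul]
      exact Tendsto.congr' (hveq.mono fun s h => h.symm) hmain
  · -- case t = 1
    intro hρx
    have hvec : ∀ (s : ℝ) (y : EuclideanSpace ℝ (Fin d)),
        x - s • y - (1 - s) • x = s • (x - y) := by
      intro s y
      rw [sub_smul, one_smul, smul_sub]; abel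
    have hcancel1 : ∀ (s D : ℝ) (N : EuclideanSpace ℝ (Fin d)), 0 < s →
        (s * (s ^ d • D))⁻¹ • (s ^ d • (s • N)) = D⁻¹ • N := by
      intro s D N hs
      rw [smul_eq_mul, smul_smul, smul_smul]
      congr 1
      rw [show s * (s ^ d * D) = (s ^ d * s) * D by ring, mul_inv,
        mul_comm ((s ^ d * s))⁻¹]
      field_simp
    have hveq : ∀ᶠ s in nhdsWithin (0:ℝ) (Set.Ioi 0),
        v s 1 x = (∫ y, ρ0 y * ρ1 (x - s • y))⁻¹ •
          ∫ y, (ρ0 y * ρ1 (x - s • y)) • (x - y) := by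
      filter_upwards [self_mem_nhdsWithin] with s hs
      have hs' : (0:ℝ) < s := hs
      rw [hv]
      have e1 : (1 + s * 1 - 1 : ℝ) = s := by ring
      rw [e1, hDeq s 1 hs' one_pos, hNeq s 1 (1 - s) hs' one_pos]
      simp only [inv_one, one_smul, div_one]
      simp only [hvec]
      have hsc : ∀ (a : ℝ) (w : EuclideanSpace ℝ (Fin d)),
          a • (s • w) = s • (a • w) := fun a w => smul_comm a s w
      simp only [hsc]
      rw [integral_smul, hcancel1 s _ _ hs']
    have hD1 : Tendsto (fun s : ℝ => ∫ y, ρ0 y * ρ1 (x - s • y))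
        (nhdsWithin 0 (Set.Ioi 0)) (nhds (ρ1 x)) := by
      have H := tendsto_param ρ0 h0nonneg h0int h0mom' (fun s y => ρ1 (x - s • y))
        (fun s => by
          exact (h0meas.mul ((h1cont.comp
            (by fun_prop : Continuous fun y : EuclideanSpace ℝ (Fin d) =>
              x - s • y)).measurable)).aestronglyMeasurable)
        (fun y => (h1cont.comp (continuous_const.sub
          (continuous_id.smul continuous_const))).continuousWithinAt)
        C1 0 (by
          intro s hs y
          rw [Real.norm_eq_abs, abs_of_nonneg (h1nonneg _)]
          simpa using hC1 _)
      simp only [smul_eq_mul, zero_smul, sub_zero] at H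
      rw [integral_mul_const, h0prob, one_mul] at H
      exact H
    have hN1 : Tendsto (fun s : ℝ => ∫ y, (ρ0 y * ρ1 (x - s • y)) • (x - y))
        (nhdsWithin 0 (Set.Ioi 0))
        (nhds (ρ1 x • (x - ∫ x₀, ρ0 x₀ • x₀))) := by
      have H := tendsto_param ρ0 h0nonneg h0int h0mom'
        (fun s y => ρ1 (x - s • y) • (x - y))
        (fun s => (h0meas.smul (((h1cont.comp (continuous_const.sub
            (continuous_id.const_smul s))).smul
            (continuous_const.sub continuous_id)).measurable)).aestronglyMeasurable)
        (fun y => ((h1cont.comp (continuous_const.sub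
            (continuous_id.smul continuous_const))).smul
            continuous_const).continuousWithinAt)
        (C1 * ‖x‖) C1 ?_
      · simp only [smul_smul, zero_smul, sub_zero] at H
        have e : (∫ y, (ρ0 y * ρ1 x) • (x - y))
            = ρ1 x • (x - ∫ x₀, ρ0 x₀ • x₀) := by
          have h1 : (∫ y, (ρ0 y * ρ1 x) • (x - y))
              = ∫ y, ρ1 x • (ρ0 y • (x - y)) := by
            congr 1; funext y; rw [smul_smul, mul_comm]
          rw [h1, integral_smul]
          congr 1
          have h2 : (∫ y, ρ0 y • (x - y))
              = (∫ y, ρ0 y • x) - ∫ y, ρ0 y • y := by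
            rw [← integral_sub (h0int.smul_const x) h0mom]
            congr 1; funext y; rw [smul_sub]
          rw [h2, integral_smul_const, h0prob, one_smul]
        rwa [e] at H
      · intro s hs y
        calc ‖ρ1 (x - s • y) • (x - y)‖
            = |ρ1 (x - s • y)| * ‖x - y‖ := by rw [norm_smul, Real.norm_eq_abs]
          _ ≤ C1 * ‖x - y‖ := by
              rw [abs_of_nonneg (h1nonneg _)]
              exact mul_le_mul_of_nonneg_right (hC1 _) (norm_nonneg _)
          _ ≤ C1 * (‖x‖ + ‖y‖) := mul_le_mul_of_nonneg_left (norm_sub_le _ _) hC1nn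
          _ = C1 * ‖x‖ + C1 * ‖y‖ := by ring
    have hmain := (hD1.inv₀ hρx.ne').smul hN1
    rw [show (x - ∫ x₀, ρ0 x₀ • x₀)
        = (ρ1 x)⁻¹ • (ρ1 x • (x - ∫ x₀, ρ0 x₀ • x₀)) from
      (inv_smul_smul₀ hρx.ne' _).symm]
    exact Tendsto.congr' (hveq.mono fun s h => h.symm) hmain
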